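/- Let G be a finite multidigraph with an edge e* = (w*, v*) such that every vertex has in-degree at least 1, the vertex v* has in-degree at least 2, and G is k-out-regular for a positive integer k. Then the critical group K(G, w*) is isomorphic to the quotient of the critical group K(𝓛G, e*) of the line graph by its k-torsion subgroup. -/

import Mathlib

open Finsupp

/-- The Laplacian of a multidigraph with edge tail map `t` and head map `h`,
as a linear endomorphism of the free abelian group on the vertices. -/
noncomputable def lap {V E : Type*} [Fintype E] [DecidableEq V] (t h : E → V) :
    (V →₀ ℤ) →ₗ[ℤ] (V →₀ ℤ) :=
  Finsupp.lift (V →₀ ℤ) ℤ V fun v =>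
    ∑ e : E, if t e = v then Finsupp.single (h e) (1 : ℤ) - Finsupp.single v 1 else 0

/-- The modified Laplacian `φ_{G,w}` : sends `v ↦ Δ_G v` for `v ≠ w`, and `w ↦ w`. -/
noncomputable def phiMod {V E : Type*} [Fintype E] [DecidableEq V] (t h : E → V) (w : V) :
    (V →₀ ℤ) →ₗ[ℤ] (V →₀ ℤ) :=
  Finsupp.lift (V →₀ ℤ) ℤ V fun v =>
    if v = w then Finsupp.single w 1 else lap t h (Finsupp.single v 1)

/-- Edges of the directed line graph: pairs `(e, f)` with `e⁺ = f⁻`. -/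
def LineEdge {V E : Type*} (t h : E → V) : Type _ := {p : E × E // h p.1 = t p.2}

instance {V E : Type*} [Fintype E] [DecidableEq V] (t h : E → V) :
    Fintype (LineEdge t h) := by
  unfold LineEdge; infer_instance

/-- in-degree of a vertex -/
def indeg {V E : Type*} [Fintype E] [DecidableEq V] (h : E → V) (v : V) : ℕ :=
  (Finset.univ.filter fun e => h e = v).card

/-- out-degree of a vertex -/
def outdeg {V E : Type*} [Fintype E] [DecidableEq V] (t : E → V) (v : V) : ℕ :=
  (Finset.univ.filter fun e => t e = v).card

/-- The modified target map `τ`: `e ↦ e⁺` for `e ≠ e*`, `e* ↦ 0`. -/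
noncomputable def tau {V E : Type*} [DecidableEq E] (h : E → V) (estar : E) :
    (E →₀ ℤ) →ₗ[ℤ] (V →₀ ℤ) :=
  Finsupp.lift (V →₀ ℤ) ℤ E fun e =>
    if e = estar then 0 else Finsupp.single (h e) 1

/-- The map `ρ`: `e ↦ Δ_G(w*) − v* − w* + e⁺` for `e ≠ e*`, `e* ↦ 0`,
where `w* = t e*` and `v* = h e*`. -/
noncomputable def rho {V E : Type*} [Fintype E] [DecidableEq V] [DecidableEq E]
    (t h : E → V) (estar : E) : (E →₀ ℤ) →ₗ[ℤ] (V →₀ ℤ) :=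
  Finsupp.lift (V →₀ ℤ) ℤ E fun e =>
    if e = estar then 0 else
      lap t h (Finsupp.single (t estar) 1) - Finsupp.single (h estar) 1
        - Finsupp.single (t estar) 1 + Finsupp.single (h e) 1

/-- The map `ρ₀`: `v ↦ Δ_G(w*) − v* − w* + v`. -/
noncomputable def rho0 {V E : Type*} [Fintype E] [DecidableEq V] (t h : E → V) (estar : E) :
    (V →₀ ℤ) →ₗ[ℤ] (V →₀ ℤ) :=
  Finsupp.lift (V →₀ ℤ) ℤ V fun v =>
    lap t h (Finsupp.single (t estar) 1) - Finsupp.single (h estar) 1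
      - Finsupp.single (t estar) 1 + Finsupp.single v 1

/-- The map `ψ`: `v ↦ Δ_G v` for `v ≠ w*`, and `w* ↦ Δ_G(w*) − v*`. -/
noncomputable def psi {V E : Type*} [Fintype E] [DecidableEq V] (t h : E → V) (estar : E) :
    (V →₀ ℤ) →ₗ[ℤ] (V →₀ ℤ) :=
  Finsupp.lift (V →₀ ℤ) ℤ V fun v =>
    if v = t estar then
      lap t h (Finsupp.single (t estar) 1) - Finsupp.single (h estar) 1
    else lap t h (Finsupp.single v 1)

/-- The map `σ`: `v ↦ Σ_{e⁻ = v} e`. -/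
noncomputable def sigmaMap {V E : Type*} [Fintype E] [DecidableEq V] (t : E → V) :
    (V →₀ ℤ) →ₗ[ℤ] (E →₀ ℤ) :=
  Finsupp.lift (E →₀ ℤ) ℤ V fun v =>
    ∑ e : E, if t e = v then Finsupp.single e (1 : ℤ) else 0


set_option linter.unusedSectionVars false
set_option maxHeartbeats 1000000

section Aux
variable {V E : Type*} [Fintype E] [DecidableEq V] [DecidableEq E]

instance instDEqLineEdge (t h : E → V) : DecidableEq (LineEdge t h) := by
  unfold LineEdge; infer_instance

theorem lift_single1 {α M : Type*} [AddCommGroup M] [Module ℤ M] (f : α → M) (a : α) :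
    Finsupp.lift M ℤ α f (single a 1) = f a := by
  rw [Finsupp.lift_apply]
  rw [Finsupp.sum_single_index]
  · exact @one_smul ℤ M _ (MulActionWithZero.toMulAction (M₀ := ℤ) (A := M)) (f a)
  · exact @zero_smul ℤ M _ _ (MulActionWithZero.toSMulWithZero ℤ M) (f a)

theorem lhom_ext1 {α M : Type*} [AddCommGroup M] [Module ℤ M]
    {f g : (α →₀ ℤ) →ₗ[ℤ] M} (H : ∀ a, f (single a 1) = g (single a 1)) : f = g := by
  refine Finsupp.lhom_ext fun a b => ?_
  have hb : (single a b : α →₀ ℤ) = b • single a 1 := by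
    rw [Finsupp.smul_single, smul_eq_mul, mul_one]
  rw [hb, f.map_smul, g.map_smul, H]

theorem sum_ite_count {M : Type*} [AddCommGroup M] (p : E → Prop) [DecidablePred p] (c : M) :
    (∑ e : E, if p e then c else 0) = (Finset.univ.filter p).card • c := by
  rw [← Finset.sum_filter, Finset.sum_const]

theorem sum_ite_sub {M : Type*} [AddCommGroup M] (p : E → Prop) [DecidablePred p]
    (g : E → M) (c : M) :
    (∑ e : E, if p e then g e - c else 0)
      = (∑ e : E, if p e then g e else 0) - (Finset.univ.filter p).card • c := by
  have key : ∀ e : E, (if p e then g e - c else 0)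
      = (if p e then g e else 0) - (if p e then c else 0) := by
    intro e; split <;> simp
  simp_rw [key, Finset.sum_sub_distrib, sum_ite_count]

theorem lap_single (t h : E → V) (v : V) :
    lap t h (single v 1)
      = ∑ e : E, if t e = v then Finsupp.single (h e) (1 : ℤ) - Finsupp.single v 1 else 0 :=
  lift_single1 _ _

theorem lap_single' (t h : E → V) (v : V) :
    lap t h (single v 1)
      = (∑ e : E, if t e = v then Finsupp.single (h e) (1 : ℤ) else 0)
        - (outdeg t v) • single v 1 := by
  rw [lap_single, sum_ite_sub]; rfl

theorem phiMod_single (t h : E → V) (w v : V) :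
    phiMod t h w (single v 1)
      = if v = w then Finsupp.single w 1 else lap t h (Finsupp.single v 1) :=
  lift_single1 _ _

theorem tau_single (h : E → V) (estar e : E) :
    tau h estar (single e 1)
      = if e = estar then 0 else Finsupp.single (h e) 1 :=
  lift_single1 _ _

theorem sigma_single (t : E → V) (v : V) :
    sigmaMap t (single v 1) = ∑ e : E, if t e = v then Finsupp.single e (1 : ℤ) else 0 :=
  lift_single1 _ _

theorem psi_single (t h : E → V) (estar : E) (v : V) :
    psi t h estar (single v 1)
      = if v = t estar then
          lap t h (Finsupp.single (t estar) 1) - Finsupp.single (h estar) 1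
        else lap t h (Finsupp.single v 1) :=
  lift_single1 _ _

theorem rho0_single (t h : E → V) (estar : E) (v : V) :
    rho0 t h estar (single v 1)
      = lap t h (Finsupp.single (t estar) 1) - Finsupp.single (h estar) 1
        - Finsupp.single (t estar) 1 + Finsupp.single v 1 :=
  lift_single1 _ _

theorem lineEdge_sum {M : Type*} [AddCommGroup M] (t h : E → V) (e : E) (g : E → M) :
    (∑ p : LineEdge t h, if p.1.1 = e then g p.1.2 else 0)
      = ∑ f : E, if t f = h e then g f else 0 := by
  classical
  have h0 : (∑ p : LineEdge t h, if p.1.1 = e then g p.1.2 else 0)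
      = ∑ p : {q : E × E // h q.1 = t q.2}, (if p.1.1 = e then g p.1.2 else 0) :=
    Fintype.sum_equiv (Equiv.refl _) _ _ (fun _ => rfl)
  rw [h0,
    ← Finset.sum_subtype (s := Finset.univ.filter fun q : E × E => h q.1 = t q.2)
      (by simp) (fun q => if q.1 = e then g q.2 else 0),
    Finset.sum_filter, Fintype.sum_prod_type]
  have key : ∀ a b : E, (if h a = t b then (if a = e then g b else 0) else 0)
      = (if a = e then (if t b = h e then g b else 0) else 0) := by
    intro a b
    by_cases ha : a = e
    · subst ha; simp [eq_comm]
    · simp [ha]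
  simp_rw [key]
  simp [Finset.sum_ite_eq']

theorem lapL_single (t h : E → V) (e : E) :
    lap (fun p : LineEdge t h => p.1.1) (fun p : LineEdge t h => p.1.2) (single e 1)
      = sigmaMap t (single (h e) 1) - (outdeg t (h e)) • single e 1 := by
  rw [lap_single, lineEdge_sum t h e (fun f => Finsupp.single f (1:ℤ) - Finsupp.single e 1),
    sum_ite_sub, sigma_single]
  rfl

theorem sigma_apply (t : E → V) (y : V →₀ ℤ) (f : E) :
    sigmaMap t y f = y (t f) := by
  have key : (Finsupp.lapply f : (E →₀ ℤ) →ₗ[ℤ] ℤ).comp (sigmaMap t)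
      = (Finsupp.lapply (t f) : (V →₀ ℤ) →ₗ[ℤ] ℤ) := by
    refine lhom_ext1 fun v => ?_
    simp only [LinearMap.coe_comp, Function.comp_apply, Finsupp.lapply_apply, sigma_single,
      Finsupp.finset_sum_apply, apply_ite (fun z : E →₀ ℤ => z f), Finsupp.single_apply,
      Finsupp.coe_zero, Pi.zero_apply]
    have key2 : ∀ x : E, (if t x = v then (if x = f then (1:ℤ) else 0) else 0)
        = (if x = f then (if t x = v then (1:ℤ) else 0) else 0) := by
      intro x; split_ifs <;> rfl
    simp_rw [key2]
    simp [Finsupp.single_apply, eq_comm]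
  exact DFunLike.congr_fun key y

noncomputable def coeffSum (α : Type*) : (α →₀ ℤ) →ₗ[ℤ] ℤ :=
  Finsupp.lift ℤ ℤ α fun _ => 1

theorem coeffSum_single {α : Type*} (a : α) : coeffSum α (single a 1) = 1 :=
  lift_single1 _ _

noncomputable def headMap (h : E → V) : (E →₀ ℤ) →ₗ[ℤ] (V →₀ ℤ) :=
  Finsupp.lift (V →₀ ℤ) ℤ E fun e => Finsupp.single (h e) 1

theorem headMap_single (h : E → V) (e : E) :
    headMap h (single e 1) = Finsupp.single (h e) 1 := lift_single1 _ _

noncomputable def gammaMap (estar : E) (k : ℕ) : (E →₀ ℤ) →ₗ[ℤ] (E →₀ ℤ) :=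
  Finsupp.lift (E →₀ ℤ) ℤ E fun e =>
    if e = estar then (k : ℤ) • Finsupp.single estar 1 else -Finsupp.single e 1

noncomputable def sigmaAux (t : E → V) (estar : E) (k : ℕ) : (V →₀ ℤ) →ₗ[ℤ] (E →₀ ℤ) :=
  Finsupp.lift (E →₀ ℤ) ℤ V fun v =>
    sigmaMap t (Finsupp.single v 1)
      - (if v = t estar then ((k : ℤ) + 1) • Finsupp.single estar 1 else 0)

theorem sV_lap (t h : E → V) : (coeffSum V).comp (lap t h) = 0 := by
  refine lhom_ext1 fun v => ?_
  rw [LinearMap.comp_apply, lap_single, map_sum]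
  simp [apply_ite (coeffSum V), coeffSum_single]

theorem sE_sigma (t : E → V) (v : V) :
    coeffSum E (sigmaMap t (single v 1)) = outdeg t v := by
  rw [sigma_single, map_sum]
  simp only [apply_ite (coeffSum E), coeffSum_single, map_zero]
  rw [sum_ite_count]
  simp [outdeg]

theorem phiL_eq (t h : E → V) (estar : E) :
    phiMod (fun p : LineEdge t h => p.1.1) (fun p : LineEdge t h => p.1.2) estar
      = lap (fun p : LineEdge t h => p.1.1) (fun p : LineEdge t h => p.1.2)
        + (Finsupp.lapply estar).smulRight
            (Finsupp.single estar 1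
              - lap (fun p : LineEdge t h => p.1.1) (fun p : LineEdge t h => p.1.2)
                  (Finsupp.single estar 1)) := by
  refine lhom_ext1 fun e => ?_
  by_cases he : e = estar
  · subst he
    rw [LinearMap.add_apply, phiMod_single, if_pos rfl, LinearMap.smulRight_apply,
      Finsupp.lapply_apply, Finsupp.single_eq_same, one_smul]
    abel
  · rw [LinearMap.add_apply, phiMod_single, if_neg he, LinearMap.smulRight_apply,
      Finsupp.lapply_apply, Finsupp.single_apply, if_neg he, zero_smul, add_zero]

theorem lapL_eq (t h : E → V) (k : ℕ) (hreg : ∀ v, outdeg t v = k) :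
    lap (fun p : LineEdge t h => p.1.1) (fun p : LineEdge t h => p.1.2)
      = (sigmaMap t).comp (headMap h) - (k : ℤ) • LinearMap.id := by
  refine lhom_ext1 fun e => ?_
  rw [LinearMap.sub_apply, LinearMap.comp_apply, headMap_single, lapL_single, hreg,
    LinearMap.smul_apply, LinearMap.id_apply, natCast_zsmul]

theorem tau_sigma (t h : E → V) (estar : E) (k : ℕ) (hreg : ∀ v, outdeg t v = k) :
    (tau h estar).comp (sigmaMap t) = psi t h estar + (k : ℤ) • LinearMap.id := by
  refine lhom_ext1 fun v => ?_
  rw [LinearMap.comp_apply, sigma_single, map_sum, LinearMap.add_apply, LinearMap.smul_apply,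
    LinearMap.id_apply, psi_single]
  simp only [apply_ite (tau h estar), map_zero, tau_single]
  by_cases hv : v = t estar
  · subst hv
    rw [if_pos rfl]
    have split : ∀ e : E, (if t e = t estar then (if e = estar then 0 else Finsupp.single (h e) (1:ℤ)) else 0)
        = (if t e = t estar then Finsupp.single (h e) (1:ℤ) else 0)
          - (if e = estar then (if t e = t estar then Finsupp.single (h e) (1:ℤ) else 0) else 0) := by
      intro e
      by_cases h1 : e = estar
      · subst h1; simp
      · simp [h1]
    simp_rw [split]
    rw [Finset.sum_sub_distrib, Finset.sum_ite_eq' Finset.univ estar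
      (fun e => if t e = t estar then Finsupp.single (h e) (1:ℤ) else 0)]
    rw [if_pos (Finset.mem_univ _), if_pos rfl, lap_single', hreg, ← natCast_zsmul]
    abel
  · rw [if_neg hv]
    have split2 : ∀ e : E, (if t e = v then (if e = estar then 0 else Finsupp.single (h e) (1:ℤ)) else 0)
        = (if t e = v then Finsupp.single (h e) (1:ℤ) else 0) := by
      intro e
      by_cases h1 : e = estar
      · have hne : t estar ≠ v := fun H => hv H.symm
        simp [h1, hne]
      · simp [h1]
    simp_rw [split2]
    rw [lap_single', hreg, ← natCast_zsmul]
    abel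

theorem tau_phiL (t h : E → V) (estar : E) (k : ℕ) (hreg : ∀ v, outdeg t v = k) :
    (tau h estar).comp
        (phiMod (fun p : LineEdge t h => p.1.1) (fun p : LineEdge t h => p.1.2) estar)
      = (psi t h estar).comp (tau h estar) := by
  refine lhom_ext1 fun e => ?_
  by_cases he : e = estar
  · rw [LinearMap.comp_apply, LinearMap.comp_apply, phiMod_single, if_pos he,
      tau_single, if_pos rfl, tau_single, if_pos he, map_zero]
  · rw [LinearMap.comp_apply, LinearMap.comp_apply, phiMod_single, if_neg he,
      tau_single, if_neg he, lapL_single, map_sub, hreg, ← natCast_zsmul, map_smul,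
      tau_single, if_neg he]
    have h9 := DFunLike.congr_fun (tau_sigma t h estar k hreg) (Finsupp.single (h e) (1:ℤ))
    rw [LinearMap.comp_apply, LinearMap.add_apply, LinearMap.smul_apply, LinearMap.id_apply] at h9
    rw [h9]
    abel

theorem phiL_gamma (t h : E → V) (estar : E) (k : ℕ) (hreg : ∀ v, outdeg t v = k) :
    (phiMod (fun p : LineEdge t h => p.1.1) (fun p : LineEdge t h => p.1.2) estar).comp
        (gammaMap estar k)
      = (k : ℤ) • LinearMap.id - (sigmaMap t).comp (tau h estar) := by
  refine lhom_ext1 fun e => ?_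
  rw [LinearMap.comp_apply, LinearMap.sub_apply, LinearMap.smul_apply, LinearMap.id_apply,
    LinearMap.comp_apply, tau_single]
  rw [show gammaMap estar k (single e 1)
      = if e = estar then (k : ℤ) • Finsupp.single estar 1 else -Finsupp.single e 1
    from lift_single1 _ _]
  by_cases he : e = estar
  · rw [if_pos he, if_pos he, map_smul, phiMod_single, if_pos rfl, map_zero, sub_zero, he]
  · rw [if_neg he, if_neg he, map_neg, phiMod_single, if_neg he, lapL_single, hreg,
      ← natCast_zsmul]
    abel

theorem sigma_lap (t h : E → V) (k : ℕ) (hreg : ∀ v, outdeg t v = k) (v : V) :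
    sigmaMap t (lap t h (Finsupp.single v 1))
      = (∑ e : E, if t e = v then sigmaMap t (Finsupp.single (h e) 1) else 0)
        - (k : ℤ) • sigmaMap t (Finsupp.single v 1) := by
  rw [lap_single, map_sum]
  simp only [apply_ite (sigmaMap t), map_zero, map_sub]
  rw [sum_ite_sub]
  rw [show (Finset.univ.filter fun e => t e = v).card = outdeg t v from rfl, hreg, ← natCast_zsmul]

theorem lapL_sigma (t h : E → V) (k : ℕ) (hreg : ∀ v, outdeg t v = k) (v : V) :
    lap (fun p : LineEdge t h => p.1.1) (fun p : LineEdge t h => p.1.2)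
        (sigmaMap t (Finsupp.single v 1))
      = (∑ e : E, if t e = v then sigmaMap t (Finsupp.single (h e) 1) else 0)
        - (k : ℤ) • sigmaMap t (Finsupp.single v 1) := by
  rw [sigma_single, map_sum]
  simp only [apply_ite (lap (fun p : LineEdge t h => p.1.1) (fun p : LineEdge t h => p.1.2)),
    map_zero, lapL_single, hreg]
  have split : ∀ e : E,
      (if t e = v then sigmaMap t (Finsupp.single (h e) 1) - k • Finsupp.single e (1:ℤ) else 0)
      = (if t e = v then sigmaMap t (Finsupp.single (h e) 1) else 0)
        - (k : ℤ) • (if t e = v then Finsupp.single e (1:ℤ) else 0) := by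
    intro e
    by_cases h1 : t e = v
    · simp [h1, natCast_zsmul]
    · simp [h1]
  simp_rw [split]
  rw [Finset.sum_sub_distrib, ← Finset.smul_sum]

theorem sigmaAux_single (t : E → V) (estar : E) (k : ℕ) (v : V) :
    sigmaAux t estar k (single v 1)
      = sigmaMap t (Finsupp.single v 1)
        - (if v = t estar then ((k : ℤ) + 1) • Finsupp.single estar 1 else 0) :=
  lift_single1 _ _

theorem sigma_psi (t h : E → V) (estar : E) (k : ℕ) (hreg : ∀ v, outdeg t v = k) :
    (sigmaMap t).comp (psi t h estar)
      = (phiMod (fun p : LineEdge t h => p.1.1) (fun p : LineEdge t h => p.1.2) estar).comp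
          (sigmaAux t estar k) := by
  refine lhom_ext1 fun v => ?_
  rw [LinearMap.comp_apply, LinearMap.comp_apply, psi_single, sigmaAux_single]
  have hphiL := DFunLike.congr_fun (phiL_eq t h estar)
  by_cases hv : v = t estar
  · have hcoef : sigmaMap t (Finsupp.single v 1) estar = 1 := by
      rw [sigma_apply, Finsupp.single_apply, if_pos hv]
    rw [if_pos hv, if_pos hv]
    simp only [map_sub, map_smul]
    rw [hphiL (sigmaMap t (Finsupp.single v 1)),
      show (phiMod (fun p : LineEdge t h => p.1.1) (fun p : LineEdge t h => p.1.2) estar)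
          (Finsupp.single estar 1) = Finsupp.single estar 1 by
        rw [phiMod_single, if_pos rfl],
      LinearMap.add_apply, LinearMap.smulRight_apply, Finsupp.lapply_apply,
      hcoef, one_smul, sigma_lap t h k hreg, lapL_sigma t h k hreg,
      lapL_single, hreg, ← natCast_zsmul, hv, add_smul, one_smul]
    abel
  · rw [if_neg hv, if_neg hv, sub_zero, hphiL (sigmaMap t (Finsupp.single v 1)),
      LinearMap.add_apply, LinearMap.smulRight_apply, Finsupp.lapply_apply]
    have hcoef : sigmaMap t (Finsupp.single v 1) estar = 0 := by
      rw [sigma_apply, Finsupp.single_apply, if_neg hv]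
    rw [hcoef, zero_smul, add_zero, sigma_lap t h k hreg, lapL_sigma t h k hreg]

theorem rho0_apply' (t h : E → V) (estar : E) (x : V →₀ ℤ) :
    rho0 t h estar x
      = x + (coeffSum V x) •
          (lap t h (Finsupp.single (t estar) 1) - Finsupp.single (h estar) 1
            - Finsupp.single (t estar) 1) := by
  have : rho0 t h estar
      = LinearMap.id + (coeffSum V).smulRight
          (lap t h (Finsupp.single (t estar) 1) - Finsupp.single (h estar) 1
            - Finsupp.single (t estar) 1) := by
    refine lhom_ext1 fun v => ?_
    rw [rho0_single, LinearMap.add_apply, LinearMap.id_apply, LinearMap.smulRight_apply,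
      coeffSum_single, one_smul]
    abel
  rw [this, LinearMap.add_apply, LinearMap.id_apply, LinearMap.smulRight_apply]

theorem coeffSum_cvec (t h : E → V) (estar : E) :
    coeffSum V (lap t h (Finsupp.single (t estar) 1) - Finsupp.single (h estar) 1
      - Finsupp.single (t estar) 1) = -2 := by
  have h0 := DFunLike.congr_fun (sV_lap t h) (Finsupp.single (t estar) (1:ℤ))
  rw [LinearMap.comp_apply, LinearMap.zero_apply] at h0
  rw [map_sub, map_sub, h0, coeffSum_single, coeffSum_single]
  norm_num

theorem rho0_invol (t h : E → V) (estar : E) :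
    (rho0 t h estar).comp (rho0 t h estar) = LinearMap.id := by
  refine lhom_ext1 fun v => ?_
  rw [LinearMap.comp_apply, LinearMap.id_apply, rho0_apply', rho0_apply', map_add, map_smul,
    coeffSum_cvec, coeffSum_single, smul_eq_mul]
  norm_num
  abel

theorem rho0_psi (t h : E → V) (estar : E) :
    (rho0 t h estar).comp (psi t h estar) = phiMod t h (t estar) := by
  refine lhom_ext1 fun v => ?_
  have h0 := DFunLike.congr_fun (sV_lap t h)
  by_cases hv : v = t estar
  · rw [LinearMap.comp_apply, psi_single, if_pos hv, phiMod_single, if_pos hv, rho0_apply',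
      map_sub]
    have h1 := h0 (Finsupp.single (t estar) (1:ℤ))
    rw [LinearMap.comp_apply, LinearMap.zero_apply] at h1
    rw [h1, coeffSum_single]
    norm_num
  · rw [LinearMap.comp_apply, psi_single, if_neg hv, phiMod_single, if_neg hv, rho0_apply']
    have h1 := h0 (Finsupp.single v (1:ℤ))
    rw [LinearMap.comp_apply, LinearMap.zero_apply] at h1
    rw [h1, zero_smul, add_zero]

theorem headMap_eq (h : E → V) (estar : E) :
    headMap h = tau h estar
      + (Finsupp.lapply estar).smulRight (Finsupp.single (h estar) 1) := by
  refine lhom_ext1 fun e => ?_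
  rw [headMap_single, LinearMap.add_apply, tau_single, LinearMap.smulRight_apply,
    Finsupp.lapply_apply, Finsupp.single_apply]
  by_cases he : e = estar
  · rw [if_pos he, if_pos he, zero_add, one_smul, he]
  · rw [if_neg he, if_neg he, zero_smul, add_zero]

theorem sE_phiL (t h : E → V) (estar : E) :
    (coeffSum E).comp
        (phiMod (fun p : LineEdge t h => p.1.1) (fun p : LineEdge t h => p.1.2) estar)
      = Finsupp.lapply estar := by
  refine lhom_ext1 fun e => ?_
  rw [LinearMap.comp_apply, phiMod_single, Finsupp.lapply_apply, Finsupp.single_apply]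
  by_cases he : e = estar
  · rw [if_pos he, if_pos he, coeffSum_single]
  · rw [if_neg he, if_neg he, lapL_single, map_sub]
    have hE : coeffSum E (sigmaMap t (Finsupp.single (h e) 1)) = outdeg t (h e) := by
      have := sE_sigma (E := E) t (h e)
      exact this
    rw [hE, map_nsmul, coeffSum_single]
    simp

theorem tau_surjective {V E : Type*} [Fintype V] [Fintype E] [DecidableEq V] [DecidableEq E]
    (t h : E → V) (estar : E)
    (hin : ∀ v : V, 1 ≤ indeg h v) (hv2 : 2 ≤ indeg h (h estar)) :
    Function.Surjective (tau h estar) := by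
  intro x
  induction x using Finsupp.induction_linear with
  | zero => exact ⟨0, map_zero _⟩
  | add f g hf hg =>
    obtain ⟨zf, hzf⟩ := hf
    obtain ⟨zg, hzg⟩ := hg
    exact ⟨zf + zg, by rw [map_add, hzf, hzg]⟩
  | single v b =>
    obtain ⟨e, he1, he2⟩ : ∃ e, h e = v ∧ e ≠ estar := by
      by_cases hve : v = h estar
      · have hcard : 1 < (Finset.univ.filter fun e => h e = h estar).card := hv2
        obtain ⟨e, hemem, hene⟩ := Finset.exists_mem_ne hcard estar
        exact ⟨e, by rw [(Finset.mem_filter.mp hemem).2, hve], hene⟩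
      · have hcard : 0 < (Finset.univ.filter fun e => h e = v).card := hin v
        obtain ⟨e, hemem⟩ := Finset.card_pos.mp hcard
        have he := (Finset.mem_filter.mp hemem).2
        exact ⟨e, he, fun H => hve (by rw [← he, H])⟩
    refine ⟨b • Finsupp.single e 1, ?_⟩
    rw [map_smul, tau_single, if_neg he2, he1, Finsupp.smul_single, smul_eq_mul, mul_one]

end Aux

/-- `K(G, w*)` is isomorphic to the quotient of `K(𝓛G, e*)` by its
`k`-torsion subgroup. -/
theorem critical_group_iso_line_graph_mod_torsion
    {V E : Type*} [Fintype V] [Fintype E] [DecidableEq V] [DecidableEq E]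
    (t h : E → V) (estar : E) (k : ℕ) (hk : 0 < k)
    (hreg : ∀ v : V, outdeg t v = k)
    (hin : ∀ v : V, 1 ≤ indeg h v) (hv : 2 ≤ indeg h (h estar)) :
    Nonempty (
      (((E →₀ ℤ) ⧸ LinearMap.range
          (phiMod (fun p : LineEdge t h => p.1.1) (fun p : LineEdge t h => p.1.2) estar)) ⧸
        Submodule.torsionBy ℤ ((E →₀ ℤ) ⧸ LinearMap.range
          (phiMod (fun p : LineEdge t h => p.1.1) (fun p : LineEdge t h => p.1.2) estar)) (k : ℤ))
      ≃ₗ[ℤ] ((V →₀ ℤ) ⧸ LinearMap.range (phiMod t h (t estar)))) := by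
    classical
  set φL := phiMod (fun p : LineEdge t h => p.1.1) (fun p : LineEdge t h => p.1.2) estar
    with hφL
  set N := LinearMap.range φL with hN
  set P := LinearMap.range (psi t h estar) with hP
  have hknz : (k : ℤ) ≠ 0 := by exact_mod_cast hk.ne'
  have key : ∀ x : E →₀ ℤ, tau h estar x ∈ P ↔ (k : ℤ) • x ∈ N := by
    intro x
    constructor
    · rintro ⟨y, hy⟩
      have h4 := DFunLike.congr_fun (phiL_gamma t h estar k hreg) x
      rw [LinearMap.comp_apply, LinearMap.sub_apply, LinearMap.smul_apply, LinearMap.id_apply,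
        LinearMap.comp_apply] at h4
      have h5 := DFunLike.congr_fun (sigma_psi t h estar k hreg) y
      rw [LinearMap.comp_apply, LinearMap.comp_apply] at h5
      rw [← hφL] at h4 h5
      refine ⟨sigmaAux t estar k y + gammaMap estar k x, ?_⟩
      rw [map_add, ← h5, hy, h4]
      abel
    · rintro ⟨z, hz⟩
      set c : ℤ := z estar with hc
      set z' : E →₀ ℤ := z - c • Finsupp.single estar 1 with hzdef
      have hz'e : z' estar = 0 := by
        simp [hzdef, hc]
      have hphiz' := DFunLike.congr_fun (phiL_eq t h estar) z'
      rw [LinearMap.add_apply, LinearMap.smulRight_apply, Finsupp.lapply_apply, hz'e,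
        zero_smul, add_zero] at hphiz'
      have hsingle : φL (Finsupp.single estar 1) = Finsupp.single estar 1 := by
        rw [hφL, phiMod_single, if_pos rfl]
      have hdecomp : φL z
          = lap (fun p : LineEdge t h => p.1.1) (fun p : LineEdge t h => p.1.2) z'
            + c • Finsupp.single estar 1 := by
        conv_lhs => rw [show z = z' + c • Finsupp.single estar 1 by rw [hzdef]; abel]
        rw [map_add, map_smul, hsingle, hφL, hphiz']
      have hcx : c = (k : ℤ) * coeffSum E x := by
        have h6 := DFunLike.congr_fun (sE_phiL t h estar) z
        rw [LinearMap.comp_apply, Finsupp.lapply_apply, ← hφL] at h6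
        rw [hz, map_smul, smul_eq_mul] at h6
        rw [hc, ← h6]
      have h8 := DFunLike.congr_fun (lapL_eq t h k hreg) z'
      rw [LinearMap.sub_apply, LinearMap.comp_apply, LinearMap.smul_apply,
        LinearMap.id_apply] at h8
      have hsig : sigmaMap t (headMap h z')
          = (k : ℤ) • (x + z' - (coeffSum E x) • Finsupp.single estar 1) := by
        have e0 : (k : ℤ) • x
            = sigmaMap t (headMap h z') - (k : ℤ) • z' + c • Finsupp.single estar 1 := by
          rw [← hz, hdecomp, h8]
        have e1 : sigmaMap t (headMap h z')
            = (k : ℤ) • x + (k : ℤ) • z' - c • Finsupp.single estar 1 := by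
          rw [e0]; abel
        rw [e1, hcx]
        conv_rhs => rw [smul_sub, smul_add]
        rw [mul_smul]
      have hdvd : ∀ w : V, (k : ℤ) ∣ headMap h z' w := by
        intro w
        obtain ⟨f, hf⟩ : ∃ f, t f = w := by
          have hcard : 0 < (Finset.univ.filter fun e => t e = w).card := by
            rw [show (Finset.univ.filter fun e => t e = w).card = outdeg t w from rfl, hreg]
            exact hk
          obtain ⟨f, hfm⟩ := Finset.card_pos.mp hcard
          exact ⟨f, (Finset.mem_filter.mp hfm).2⟩
        have h7 := congrArg (fun u : E →₀ ℤ => u f) hsig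
        rw [sigma_apply, hf] at h7
        rw [h7, Finsupp.smul_apply, smul_eq_mul]
        exact Dvd.intro _ rfl
      set y' : V →₀ ℤ := (headMap h z').mapRange (fun a => a / (k : ℤ)) (by simp) with hy'
      have hky' : (k : ℤ) • y' = headMap h z' := by
        ext w
        rw [Finsupp.smul_apply, hy', Finsupp.mapRange_apply, smul_eq_mul,
          Int.mul_ediv_cancel' (hdvd w)]
      have hsy' : sigmaMap t y' = x + z' - (coeffSum E x) • Finsupp.single estar 1 := by
        have hinj := smul_right_injective (E →₀ ℤ) hknz
        apply hinj
        show (k : ℤ) • sigmaMap t y' = (k : ℤ) • (x + z' - (coeffSum E x) • Finsupp.single estar 1)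
        rw [← map_smul, hky', hsig]
      have hx : x = sigmaMap t y' - z' + (coeffSum E x) • Finsupp.single estar 1 := by
        rw [hsy']; abel
      have h9 := DFunLike.congr_fun (tau_sigma t h estar k hreg) y'
      rw [LinearMap.comp_apply, LinearMap.add_apply, LinearMap.smul_apply,
        LinearMap.id_apply] at h9
      have h10 := DFunLike.congr_fun (headMap_eq h estar) z'
      rw [LinearMap.add_apply, LinearMap.smulRight_apply, Finsupp.lapply_apply, hz'e, zero_smul,
        add_zero] at h10
      refine ⟨y', ?_⟩
      have htaue : tau h estar (Finsupp.single estar 1) = 0 := by rw [tau_single, if_pos rfl]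
      conv_rhs => rw [hx]
      rw [map_add, map_sub, map_smul, htaue, smul_zero, add_zero, h9, ← h10, hky']
      abel
  have hNle : N ≤ LinearMap.ker ((P.mkQ).comp (tau h estar)) := by
    intro x hx
    obtain ⟨z, rfl⟩ := hx
    have h1 := DFunLike.congr_fun (tau_phiL t h estar k hreg) z
    rw [LinearMap.comp_apply, LinearMap.comp_apply] at h1
    rw [LinearMap.mem_ker, LinearMap.comp_apply, hφL, h1, Submodule.mkQ_apply,
      Submodule.Quotient.mk_eq_zero]
    exact ⟨tau h estar z, rfl⟩
  set τbar := Submodule.liftQ N ((P.mkQ).comp (tau h estar)) hNle with hτbar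
  have hτmk : ∀ x : E →₀ ℤ, τbar (Submodule.Quotient.mk x) = P.mkQ (tau h estar x) :=
    fun x => rfl
  have hsurj : Function.Surjective τbar := by
    intro q
    obtain ⟨w, rfl⟩ := Submodule.Quotient.mk_surjective P q
    obtain ⟨x, hx⟩ := tau_surjective t h estar hin hv w
    exact ⟨Submodule.Quotient.mk x, by rw [hτmk, hx, Submodule.mkQ_apply]⟩
  have hker : LinearMap.ker τbar = Submodule.torsionBy ℤ ((E →₀ ℤ) ⧸ N) (k : ℤ) := by
    ext q
    obtain ⟨x, rfl⟩ := Submodule.Quotient.mk_surjective N q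
    rw [LinearMap.mem_ker, Submodule.mem_torsionBy_iff, hτmk, Submodule.mkQ_apply,
      Submodule.Quotient.mk_eq_zero, ← Submodule.Quotient.mk_smul,
      Submodule.Quotient.mk_eq_zero]
    exact key x
  let eρ : (V →₀ ℤ) ≃ₗ[ℤ] (V →₀ ℤ) :=
    LinearEquiv.ofLinear (rho0 t h estar) (rho0 t h estar) (rho0_invol t h estar)
      (rho0_invol t h estar)
  have hmapP : P.map (eρ : (V →₀ ℤ) →ₗ[ℤ] (V →₀ ℤ))
      = LinearMap.range (phiMod t h (t estar)) := by
    rw [hP, ← LinearMap.range_comp]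
    rw [show (eρ : (V →₀ ℤ) →ₗ[ℤ] (V →₀ ℤ)) = rho0 t h estar from rfl, rho0_psi]
  exact ⟨LinearEquiv.trans (LinearEquiv.trans (Submodule.quotEquivOfEq _ _ hker.symm)
    (LinearMap.quotKerEquivOfSurjective τbar hsurj)) (Submodule.Quotient.equiv P _ eρ hmapP)⟩
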